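/- For σ > 0 and constants P, σ_ν² > 0, the function ω ↦ (P + σ_ν² − P·e^{−2ω²σ²})/(2Pω²e^{−ω²σ²}) on (0,∞) is, after the substitution β = ω²σ², minimized at the unique β > 0 solving (σ_ν²/P + 1)(β − 1)e^{2β} + (β + 1) = 0. -/

import Mathlib

open Real

private noncomputable def gg (c x : ℝ) : ℝ := c * (x - 1) * Real.exp (2 * x) + (x + 1)
private noncomputable def hh (c x : ℝ) : ℝ := (c * Real.exp x - Real.exp (-x)) / (2 * x)
private noncomputable def FF (x : ℝ) : ℝ := (x + 1) * Real.exp (-(2 * x)) / (1 - x)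

private lemma gg_eq (c x : ℝ) (hx : x ≠ 1) :
    gg c x = (FF x - c) * ((1 - x) * Real.exp (2 * x)) := by
  unfold gg FF
  rw [Real.exp_neg]
  have h1 : (1 : ℝ) - x ≠ 0 := sub_ne_zero.2 (by intro h; exact hx h.symm)
  field_simp
  ring

private lemma FF_hasDerivAt (x : ℝ) (hx : x ≠ 1) :
    HasDerivAt FF (Real.exp (-(2 * x)) * (2 * x ^ 2) / (1 - x) ^ 2) x := by
  have h1 : (1 : ℝ) - x ≠ 0 := sub_ne_zero.2 (by intro h; exact hx h.symm)
  have hn : HasDerivAt (fun y : ℝ => (y + 1) * Real.exp (-(2 * y)))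
      (1 * Real.exp (-(2 * x)) + (x + 1) * (Real.exp (-(2 * x)) * (-2))) x := by
    have h2 : HasDerivAt (fun y : ℝ => -(2 * y)) (-2) x := by
      have := ((hasDerivAt_id x).const_mul (2 : ℝ)).neg
      rw [mul_one] at this
      exact this
    exact ((hasDerivAt_id x).add_const 1).mul h2.exp
  have hd : HasDerivAt (fun y : ℝ => 1 - y) (0 - 1) x :=
    (hasDerivAt_const x 1).sub (hasDerivAt_id x)
  have := hn.div hd h1
  refine this.congr_deriv (Eq.symm ?_)
  field_simp
  ring

private lemma FF_contOn : ContinuousOn FF (Set.Ico (0:ℝ) 1) := by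
  apply ContinuousOn.div
  · exact (continuous_id.add continuous_const).continuousOn.mul
      (Real.continuous_exp.comp (continuous_const.mul continuous_id).neg).continuousOn
  · exact (continuous_const.sub continuous_id).continuousOn
  · intro x hx
    exact sub_ne_zero.2 (ne_of_gt hx.2)

private lemma FF_mono : StrictMonoOn FF (Set.Ico (0:ℝ) 1) := by
  apply strictMonoOn_of_deriv_pos (convex_Ico 0 1) FF_contOn
  intro x hx
  rw [interior_Ico] at hx
  rw [(FF_hasDerivAt x (ne_of_lt hx.2)).deriv]
  have h1 : (0:ℝ) < 1 - x := by linarith [hx.2]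
  exact div_pos (mul_pos (Real.exp_pos _) (mul_pos two_pos (pow_pos hx.1 2)))
    (pow_pos h1 2)

private lemma FF_zero : FF 0 = 1 := by
  unfold FF; norm_num

private lemma gg_pos_of_one_le (c x : ℝ) (hc : 1 < c) (hx : 1 ≤ x) : 0 < gg c x := by
  unfold gg
  have : 0 ≤ c * (x - 1) * Real.exp (2 * x) := by
    apply mul_nonneg (mul_nonneg (by linarith) (by linarith)) (Real.exp_pos _).le
  nlinarith

private lemma hh_hasDerivAt (c x : ℝ) (hx : x ≠ 0) :
    HasDerivAt (hh c) (gg c x * Real.exp (-x) / (2 * x ^ 2)) x := by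
  have h2 : (2 : ℝ) * x ≠ 0 := by simpa using hx
  have hn : HasDerivAt (fun y : ℝ => c * Real.exp y - Real.exp (-y))
      (c * Real.exp x - Real.exp (-x) * (-1)) x := by
    have he : HasDerivAt (fun y : ℝ => Real.exp (-y)) (Real.exp (-x) * (-1)) x :=
      (hasDerivAt_id x).neg.exp
    exact ((Real.hasDerivAt_exp x).const_mul c).sub he
  have hd : HasDerivAt (fun y : ℝ => 2 * y) 2 x := by
    simpa using (hasDerivAt_id x).const_mul (2:ℝ)
  have := hn.div hd h2
  refine this.congr_deriv (Eq.symm ?_)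
  unfold gg
  rw [show Real.exp (2 * x) = Real.exp x * Real.exp x by
        rw [← Real.exp_add]; congr 1; ring]
  rw [div_eq_div_iff (mul_ne_zero two_ne_zero (pow_ne_zero 2 hx)) (pow_ne_zero 2 h2)]
  have huv : Real.exp x * Real.exp (-x) = 1 := by
    rw [← Real.exp_add]; simp
  linear_combination (4 * x ^ 2 * c * (x - 1) * Real.exp x) * huv

private lemma hh_contOn (c : ℝ) {s : Set ℝ} (hs : ∀ x ∈ s, x ≠ 0) :
    ContinuousOn (hh c) s := by
  apply ContinuousOn.div
  · exact ((continuous_const.mul Real.continuous_exp).sub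
      (Real.continuous_exp.comp continuous_neg)).continuousOn
  · exact (continuous_const.mul continuous_id).continuousOn
  · intro x hx
    simpa using hs x hx

/-- Key: the root is in (0,1), and hh is minimized there among positive reals. -/
private lemma key (c : ℝ) (hc : 1 < c) :
    (∃! β : ℝ, 0 < β ∧ gg c β = 0) ∧
    ∀ β : ℝ, 0 < β → gg c β = 0 → ∀ x : ℝ, 0 < x → hh c β ≤ hh c x := by
  have hc0 : (0:ℝ) < c := by linarith
  -- any positive root lies in (0,1) and satisfies FF β = c
  have root_char : ∀ β : ℝ, 0 < β → gg c β = 0 → β < 1 ∧ FF β = c := by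
    intro β hβ hg
    have hβ1 : β < 1 := by
      by_contra h
      push_neg at h
      exact absurd hg (ne_of_gt (gg_pos_of_one_le c β hc h))
    refine ⟨hβ1, ?_⟩
    have := gg_eq c β (ne_of_lt hβ1)
    rw [hg] at this
    have hpos : (0:ℝ) < (1 - β) * Real.exp (2 * β) :=
      mul_pos (by linarith) (Real.exp_pos _)
    have := (mul_eq_zero.1 this.symm).resolve_right (ne_of_gt hpos)
    linarith [sub_eq_zero.1 this]
  constructor
  · -- existence and uniqueness
    have hex : ∃ β : ℝ, 0 < β ∧ β < 1 ∧ FF β = c := by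
      obtain ⟨x₁, hx₁def⟩ : ∃ x₁ : ℝ, x₁ = 1 - Real.exp (-2) / c := ⟨_, rfl⟩
      have he2 : (0:ℝ) < Real.exp (-2) := Real.exp_pos _
      have he2' : Real.exp (-2) < 1 := by
        rw [Real.exp_lt_one_iff]; norm_num
      have hx₁0 : 0 < x₁ := by
        have : Real.exp (-2) / c < 1 := by
          rw [div_lt_one hc0]; linarith
        rw [hx₁def]; linarith
      have hx₁1 : x₁ < 1 := by
        rw [hx₁def]
        have : 0 < Real.exp (-2) / c := by positivity
        linarith
      have hFx₁ : c ≤ FF x₁ := by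
        unfold FF
        have h1x : 1 - x₁ = Real.exp (-2) / c := by rw [hx₁def]; ring
        rw [h1x, le_div_iff₀ (by positivity)]
        have h1 : Real.exp (-2) ≤ Real.exp (-(2 * x₁)) := by
          apply Real.exp_le_exp.2; nlinarith
        have h2 : c * (Real.exp (-2) / c) = Real.exp (-2) := by
          field_simp
        have h3 : 1 * Real.exp (-2) ≤ (x₁ + 1) * Real.exp (-(2 * x₁)) :=
          mul_le_mul (by linarith) h1 he2.le (by linarith)
        linarith
      have hsub : Set.Icc (0:ℝ) x₁ ⊆ Set.Ico (0:ℝ) 1 := fun y hy =>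
        ⟨hy.1, lt_of_le_of_lt hy.2 hx₁1⟩
      have hivt := intermediate_value_Icc hx₁0.le (FF_contOn.mono hsub)
      have hcmem : c ∈ Set.Icc (FF 0) (FF x₁) := by
        rw [FF_zero]; exact ⟨hc.le, hFx₁⟩
      obtain ⟨β, hβmem, hβval⟩ := hivt hcmem
      refine ⟨β, ?_, lt_of_le_of_lt hβmem.2 hx₁1, hβval⟩
      rcases eq_or_lt_of_le hβmem.1 with h | h
      · exfalso; rw [← h, FF_zero] at hβval; linarith
      · exact h
    obtain ⟨β, hβ0, hβ1, hβF⟩ := hex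
    refine ⟨β, ⟨hβ0, ?_⟩, ?_⟩
    · rw [gg_eq c β (ne_of_lt hβ1), hβF]; ring
    · intro b hb
      obtain ⟨hb1, hbF⟩ := root_char b hb.1 hb.2
      exact FF_mono.injOn ⟨hb.1.le, hb1⟩ ⟨hβ0.le, hβ1⟩ (hbF.trans hβF.symm)
  · -- minimization
    intro β hβ0 hg x hx
    obtain ⟨hβ1, hβF⟩ := root_char β hβ0 hg
    -- sign of gg: negative on (0, β), positive on (β, ∞)
    have gneg : ∀ y : ℝ, 0 < y → y < β → gg c y < 0 := by
      intro y hy0 hyβ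
      have hy1 : y < 1 := hyβ.trans hβ1
      rw [gg_eq c y (ne_of_lt hy1)]
      have hFy : FF y < c := by
        rw [← hβF]
        exact FF_mono ⟨hy0.le, hy1⟩ ⟨hβ0.le, hβ1⟩ hyβ
      have : (0:ℝ) < (1 - y) * Real.exp (2 * y) :=
        mul_pos (by linarith) (Real.exp_pos _)
      nlinarith
    have gpos : ∀ y : ℝ, β < y → 0 < gg c y := by
      intro y hβy
      rcases lt_or_ge y 1 with hy1 | hy1
      · rw [gg_eq c y (ne_of_lt hy1)]
        have hFy : c < FF y := by
          rw [← hβF]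
          exact FF_mono ⟨hβ0.le, hβ1⟩ ⟨(hβ0.trans hβy).le, hy1⟩ hβy
        have : (0:ℝ) < (1 - y) * Real.exp (2 * y) :=
          mul_pos (by linarith) (Real.exp_pos _)
        nlinarith
      · exact gg_pos_of_one_le c y hc hy1
    -- hh is strictly decreasing on (0, β] and increasing on [β, ∞)
    have hanti : StrictAntiOn (hh c) (Set.Ioc 0 β) := by
      apply strictAntiOn_of_deriv_neg (convex_Ioc 0 β)
        (hh_contOn c (fun y hy => ne_of_gt hy.1))
      intro y hy
      rw [interior_Ioc] at hy
      rw [(hh_hasDerivAt c y (ne_of_gt hy.1)).deriv]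
      have hg := gneg y hy.1 hy.2
      have h1 : (0:ℝ) < Real.exp (-y) := Real.exp_pos _
      have h2 : (0:ℝ) < 2 * y ^ 2 := mul_pos two_pos (pow_pos hy.1 2)
      exact div_neg_of_neg_of_pos (mul_neg_of_neg_of_pos hg h1) h2
    have hmono : StrictMonoOn (hh c) (Set.Ici β) := by
      apply strictMonoOn_of_deriv_pos (convex_Ici β)
        (hh_contOn c (fun y hy => ne_of_gt (lt_of_lt_of_le hβ0 hy)))
      intro y hy
      rw [interior_Ici] at hy
      rw [(hh_hasDerivAt c y (ne_of_gt (hβ0.trans hy))).deriv]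
      have hg := gpos y hy
      have h1 : (0:ℝ) < Real.exp (-y) := Real.exp_pos _
      have h2 : (0:ℝ) < 2 * y ^ 2 := mul_pos two_pos (pow_pos (hβ0.trans hy) 2)
      exact div_pos (mul_pos hg h1) h2
    rcases lt_trichotomy x β with h | h | h
    · exact (hanti ⟨hx, h.le⟩ ⟨hβ0, le_refl β⟩ h).le
    · rw [h]
    · exact (hmono (le_refl β) h.le h).le

private lemma val_eq (P σν2 σ t : ℝ) (hP : 0 < P) (hσ : 0 < σ) (ht : 0 < t) :
    (P + σν2 - P * Real.exp (-2 * t * σ^2)) / (2 * P * t * Real.exp (-t * σ^2))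
      = σ^2 * hh (σν2 / P + 1) (t * σ^2) := by
  unfold hh
  have e1 : Real.exp (-2 * t * σ^2) = (Real.exp (t * σ^2))⁻¹ * (Real.exp (t * σ^2))⁻¹ := by
    rw [← Real.exp_neg, ← Real.exp_add]
    congr 1; ring
  have e2 : Real.exp (-t * σ^2) = (Real.exp (t * σ^2))⁻¹ := by
    rw [← Real.exp_neg]; congr 1; ring
  have e3 : Real.exp (-(t * σ^2)) = (Real.exp (t * σ^2))⁻¹ := Real.exp_neg _
  rw [e1, e2, e3]
  have hexp : Real.exp (t * σ^2) ≠ 0 := Real.exp_ne_zero _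
  field_simp
  ring

/-- Gaussian noise, total power constraint: the asymptotic variance
`ω ↦ (P + σν² − P·e^{−2ω²σ²})/(2Pω²e^{−ω²σ²})` on `(0,∞)` is, after the
substitution `β = ω²σ²`, minimized at the unique `β > 0` solving
`(σν²/P + 1)(β − 1)e^{2β} + (β + 1) = 0`. -/
theorem gaussian_location_asv_min_tpc (σ P σν2 : ℝ) (hσ : 0 < σ) (hP : 0 < P)
    (hν : 0 < σν2) :
    (∃! β : ℝ, 0 < β ∧ (σν2 / P + 1) * (β - 1) * Real.exp (2 * β) + (β + 1) = 0) ∧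
    ∀ β : ℝ, 0 < β → (σν2 / P + 1) * (β - 1) * Real.exp (2 * β) + (β + 1) = 0 →
      ∀ ω : ℝ, 0 < ω →
        (P + σν2 - P * Real.exp (-2 * (Real.sqrt β / σ)^2 * σ^2)) /
            (2 * P * (Real.sqrt β / σ)^2 * Real.exp (-(Real.sqrt β / σ)^2 * σ^2)) ≤
          (P + σν2 - P * Real.exp (-2 * ω^2 * σ^2)) /
            (2 * P * ω^2 * Real.exp (-ω^2 * σ^2)) := by
  set c : ℝ := σν2 / P + 1 with hcdef
  have hc : 1 < c := by
    have : 0 < σν2 / P := div_pos hν hP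
    simp only [hcdef]; linarith
  obtain ⟨hex, hmin⟩ := key c hc
  constructor
  · exact hex
  · intro β hβ hroot ω hω
    have hgβ : gg c β = 0 := hroot
    set t : ℝ := (Real.sqrt β / σ)^2 with htdef
    have ht : 0 < t := by
      have : 0 < Real.sqrt β := Real.sqrt_pos.2 hβ
      positivity
    have hts : t * σ^2 = β := by
      simp only [htdef]
      rw [div_pow, Real.sq_sqrt hβ.le]
      field_simp
    have hω2 : 0 < ω^2 := by positivity
    rw [val_eq P σν2 σ t hP hσ ht, val_eq P σν2 σ (ω^2) hP hσ hω2, hts]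
    exact mul_le_mul_of_nonneg_left
      (hmin β hβ hgβ (ω^2 * σ^2) (by positivity)) (sq_nonneg σ)
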